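/- arXiv:1904.01358 — 2 statements merged into one kernel-verified Lean document; each statement's English description precedes it below -/
import Mathlib

section
/- For every partition λ and every number of variables n, the Schur polynomial s_λ(x_1,…,x_n), defined as the bialternant j_λ/v_n where v_n = ∏_{1≤i<j≤n}(x_i−x_j) is the Vandermonde determinant and j_λ = ∑_{σ∈S_n} sgn(σ) x^{σ(λ+δ)} with δ=(n−1,n−2,…,0), equals the generating function ∑_{T∈SSYT(λ,n)} x^{wt(T)}, the sum over all semistandard Young tableaux of shape λ with entries in {1,…,n}, where wt(T) is the weak composition whose i-th entry counts the boxes of T labeled i. -/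
open MvPolynomial

/-- The monomial `x^a` in `n` variables, for a weak composition `a` (recorded on `Fin n`). -/
noncomputable def xpow (n : ℕ) (a : Fin n → ℕ) : MvPolynomial (Fin n) ℤ :=
  ∏ i, X i ^ a i

/-- Semistandard Young tableaux of shape `lam` (a partition, given as a weakly decreasing
function `ℕ → ℕ` with finite support) with entries in `{1, …, n}`.  Rows weakly increase
left to right and columns strictly increase top to bottom; entries outside the diagram
are recorded as `0`. -/
structure SSYT (lam : ℕ → ℕ) (n : ℕ) where
  entry : ℕ → ℕ → ℕ
  pos : ∀ i j, j < lam i → 1 ≤ entry i j ∧ entry i j ≤ n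
  zero : ∀ i j, ¬ j < lam i → entry i j = 0
  rowWeak : ∀ i j j', j ≤ j' → j' < lam i → entry i j ≤ entry i j'
  colStrict : ∀ i i' j, i < i' → j < lam i → j < lam i' → entry i j < entry i' j

/-- The weight of a tableau: `T.wt k` is the number of boxes labelled `k`. -/
noncomputable def SSYT.wt {lam : ℕ → ℕ} {n : ℕ} (T : SSYT lam n) (k : ℕ) : ℕ :=
  {p : ℕ × ℕ | p.2 < lam p.1 ∧ T.entry p.1 p.2 = k}.ncard

/-- The monomial `x^{wt(T)}` associated to a semistandard Young tableau. -/
noncomputable def ssytMonomial {lam : ℕ → ℕ} {n : ℕ} (T : SSYT lam n) :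
    MvPolynomial (Fin n) ℤ :=
  ∏ i : Fin n, X i ^ T.wt ((i : ℕ) + 1)

/-- The Vandermonde determinant `v_n = ∏_{1 ≤ i < j ≤ n} (x_i - x_j)`. -/
noncomputable def vandermonde (n : ℕ) : MvPolynomial (Fin n) ℤ :=
  ∏ p ∈ Finset.univ.filter (fun p : Fin n × Fin n => p.1 < p.2), (X p.1 - X p.2)

/-- The bialternant `j_λ = ∑_{σ ∈ S_n} sgn(σ) x^{σ(λ+δ)}`, where `δ = (n-1, n-2, …, 0)`. -/
noncomputable def bialternant (n : ℕ) (lam : ℕ → ℕ) : MvPolynomial (Fin n) ℤ :=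
  ∑ σ : Equiv.Perm (Fin n),
    (Equiv.Perm.sign σ : ℤ) • ∏ i : Fin n, X (σ i) ^ (lam (i : ℕ) + (n - 1 - (i : ℕ)))


-- extensionality
theorem SSYT.ext' {lam n} {T U : SSYT lam n} (h : T.entry = U.entry) : T = U := by
  cases T; cases U; simp_all

-- copy along shape equality
def SSYT.copy {lam lam' : ℕ → ℕ} {n : ℕ} (T : SSYT lam n) (h : lam = lam') : SSYT lam' n :=
  h ▸ T

theorem SSYT.copy_entry {lam lam' : ℕ → ℕ} {n : ℕ} (T : SSYT lam n) (h : lam = lam') :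
    (T.copy h).entry = T.entry := by subst h; rfl

theorem ssytMonomial_copy {lam lam' : ℕ → ℕ} {n : ℕ} (T : SSYT lam n) (h : lam = lam') :
    ssytMonomial (T.copy h) = ssytMonomial T := by subst h; rfl

-- finiteness
theorem SSYT.finite (lam : ℕ → ℕ) (n N : ℕ) (hN : ∀ i, N ≤ i → lam i = 0) :
    Finite (SSYT lam n) := by
  classical
  let B := (Finset.range N).sup lam
  let f : SSYT lam n → (Fin N → Fin B → Fin (n+1)) := fun T i j =>
    ⟨T.entry i j, by
      rcases lt_or_ge (j : ℕ) (lam i) with h | h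
      · exact Nat.lt_succ_of_le (T.pos i j h).2
      · rw [T.zero i j (not_lt.2 h)]; exact Nat.succ_pos n⟩
  have hf : Function.Injective f := by
    intro T U h
    apply SSYT.ext'
    funext i j
    rcases lt_or_ge i N with hi | hi
    swap
    · rw [T.zero i j, U.zero i j] <;> simp [hN i hi]
    rcases lt_or_ge j (lam i) with hj | hj
    swap
    · rw [T.zero i j (not_lt.2 hj), U.zero i j (not_lt.2 hj)]
    have hjB : j < B := lt_of_lt_of_le hj (Finset.le_sup (Finset.mem_range.2 hi))
    have := congrFun (congrFun h ⟨i, hi⟩) ⟨j, hjB⟩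
    simpa [f] using this
  exact Finite.of_injective f hf

-- entries in row i are at least i+1
theorem SSYT.entry_lb {lam n} (T : SSYT lam n) (hpart : ∀ i j, i ≤ j → lam j ≤ lam i) :
    ∀ i j, j < lam i → i + 1 ≤ T.entry i j := by
  intro i
  induction i with
  | zero => intro j hj; exact (T.pos 0 j hj).1
  | succ i ih =>
    intro j hj
    have hji : j < lam i := lt_of_lt_of_le hj (hpart i (i+1) (Nat.le_succ i))
    exact Nat.succ_le_of_lt (lt_of_le_of_lt (ih j hji) (T.colStrict i (i+1) j (Nat.lt_succ_self i) hji hj))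

-- wt as a finite sum of row counts
theorem SSYT.wt_eq_sum {lam n} (T : SSYT lam n) (N : ℕ) (hN : ∀ i, N ≤ i → lam i = 0) (k : ℕ) :
    T.wt k = ∑ i ∈ Finset.range N, ((Finset.range (lam i)).filter (fun j => T.entry i j = k)).card := by
  classical
  have hset : {p : ℕ × ℕ | p.2 < lam p.1 ∧ T.entry p.1 p.2 = k} =
      ↑((Finset.range N).biUnion (fun i =>
        (((Finset.range (lam i)).filter (fun j => T.entry i j = k)).map
          ⟨fun j => (i, j), fun a b h => by simpa using h⟩))) := by
    ext ⟨i, j⟩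
    simp only [Set.mem_setOf_eq, Finset.coe_biUnion, Set.mem_iUnion, Finset.mem_coe,
      Finset.mem_biUnion, Finset.mem_range, Finset.mem_map, Finset.mem_filter,
      Function.Embedding.coeFn_mk, Prod.mk.injEq]
    constructor
    · rintro ⟨h1, h2⟩
      refine ⟨i, ?_, j, ⟨⟨h1, h2⟩, rfl⟩⟩
      by_contra hc
      rw [hN i (not_lt.1 hc)] at h1
      exact Nat.not_lt_zero j h1
    · rintro ⟨i', _, j', ⟨⟨hj', h2⟩, h⟩⟩
      obtain ⟨rfl, rfl⟩ := Prod.mk.inj h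
      exact ⟨hj', h2⟩
  rw [SSYT.wt, hset, Set.ncard_coe_finset, Finset.card_biUnion]
  · simp
  · intro a _ b _ hab
    simp only [Finset.disjoint_left]
    rintro ⟨x, y⟩ hx hy
    simp only [Finset.mem_map, Function.Embedding.coeFn_mk, Prod.mk.injEq] at hx hy
    obtain ⟨_, _, h1⟩ := hx
    obtain ⟨_, _, h⟩ := hy
    exact hab ((Prod.mk.inj h1).1.trans (Prod.mk.inj h).1.symm)

-- bialternant as determinant
theorem bialternant_eq_det (n : ℕ) (lam : ℕ → ℕ) :
    bialternant n lam =
      Matrix.det (Matrix.of fun i j : Fin n => (X i : MvPolynomial (Fin n) ℤ) ^ (lam (j : ℕ) + (n - 1 - (j : ℕ)))) := by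
  rw [Matrix.det_apply, bialternant]
  refine Finset.sum_congr rfl fun σ _ => ?_
  rw [Units.smul_def]
  rfl

/-- interlacing partition from `g` -/
def mu (n : ℕ) (g : Fin n → ℕ) : ℕ → ℕ := fun i => if h : i < n then g ⟨i, h⟩ else 0

theorem telescope {R : Type*} [CommRing R] (x t : R) (c : ℕ) :
    ∀ a b : ℕ, b ≤ a →
    (x - t) * ∑ m ∈ Finset.Icc b a, t ^ (a - m) * x ^ (m + c) =
      x ^ (a + 1 + c) - t ^ (a - b + 1) * x ^ (b + c) := by
  intro a
  induction a with
  | zero =>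
    intro b hb
    interval_cases b
    simp [Finset.Icc_self]
    ring
  | succ a ih =>
    intro b hb
    rcases Nat.eq_or_lt_of_le hb with h | h
    · subst h
      simp [Finset.Icc_self]
      ring
    · have hba : b ≤ a := Nat.lt_succ_iff.1 h
      rw [show Finset.Icc b (a+1) = insert (a+1) (Finset.Icc b a) by
            ext m; simp only [Finset.mem_Icc, Finset.mem_insert]; omega
          ]
      rw [Finset.sum_insert (by simp)]
      have hrw : ∀ m ∈ Finset.Icc b a, t ^ (a + 1 - m) * x ^ (m + c)
          = t * (t ^ (a - m) * x ^ (m + c)) := by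
        intro m hm
        have : a + 1 - m = (a - m) + 1 := by
          have := (Finset.mem_Icc.1 hm).2; omega
        rw [this, pow_succ]
        ring
      rw [Finset.sum_congr rfl hrw, ← Finset.mul_sum]
      have expand : (x - t) * (t ^ (a + 1 - (a+1)) * x ^ (a + 1 + c) + t * ∑ m ∈ Finset.Icc b a, t ^ (a - m) * x ^ (m + c))
          = (x - t) * x ^ (a+1+c) + t * ((x - t) * ∑ m ∈ Finset.Icc b a, t ^ (a - m) * x ^ (m + c)) := by
        simp; ring
      rw [expand, ih b hba]
      have e1 : a + 1 + 1 + c = (a + 1 + c) + 1 := by omega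
      have e2 : a + 1 - b + 1 = (a - b + 1) + 1 := by omega
      rw [e1, e2, pow_succ, pow_succ]
      ring

section ClaimB
variable (n : ℕ) (lam : ℕ → ℕ)

/-- matrix after the first `t` column operations -/
noncomputable def stepMat (t : ℕ) : Matrix (Fin (n+1)) (Fin (n+1)) (MvPolynomial (Fin (n+1)) ℤ) :=
  Matrix.of fun i j =>
    if (j : ℕ) < t then
      X i ^ (lam (j:ℕ) + (n - (j:ℕ)))
        - X (Fin.last n) ^ (lam (j:ℕ) - lam ((j:ℕ)+1) + 1) * X i ^ (lam ((j:ℕ)+1) + (n - ((j:ℕ)+1)))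
    else X i ^ (lam (j:ℕ) + (n - (j:ℕ)))

theorem stepMat_fix : ∀ t, t ≤ n → (stepMat n lam t).det = (stepMat n lam 0).det := by
  intro t
  induction t with
  | zero => intro _; rfl
  | succ t ih =>
    intro ht
    have ht' : t ≤ n := Nat.le_of_succ_le ht
    rw [← ih ht']
    have htn : (t : ℕ) < n + 1 := Nat.lt_succ_of_le ht'
    have htn2 : (t + 1 : ℕ) < n + 1 := Nat.succ_lt_succ (Nat.lt_of_succ_le ht)
    have key : stepMat n lam (t+1) =
        Matrix.updateCol (stepMat n lam t) ⟨t, htn⟩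
          (fun k => stepMat n lam t k ⟨t, htn⟩ +
            (-((X (Fin.last n) : MvPolynomial (Fin (n+1)) ℤ) ^ (lam t - lam (t+1) + 1))) •
              stepMat n lam t k ⟨t+1, htn2⟩) := by
      apply Matrix.ext
      intro i j
      by_cases hj : j = ⟨t, htn⟩
      · subst hj
        rw [Matrix.updateCol_apply, if_pos rfl]
        simp only [stepMat, Matrix.of_apply]
        rw [if_pos (show t < t+1 from Nat.lt_succ_self t),
            if_neg (show ¬ t < t from lt_irrefl t),
            if_neg (show ¬ t + 1 < t by omega)]
        simp only [smul_eq_mul]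
        ring
      · have hjt : (j : ℕ) ≠ t := fun h => hj (Fin.ext h)
        rw [Matrix.updateCol_apply, if_neg hj]
        simp only [stepMat, Matrix.of_apply]
        by_cases h2 : (j : ℕ) < t
        · rw [if_pos h2, if_pos (by omega)]
        · rw [if_neg h2, if_neg (by omega)]
    rw [key, Matrix.det_updateCol_add_smul_self]
    exact fun h => by simpa using congrArg Fin.val h
end ClaimB

theorem claimB (n : ℕ) (lam : ℕ → ℕ) (hpart : ∀ i j, i ≤ j → lam j ≤ lam i) :
    bialternant (n+1) lam =
      (∏ i : Fin n, (X i.castSucc - X (Fin.last n))) *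
        ∑ g ∈ Fintype.piFinset (fun i : Fin n => Finset.Icc (lam ((i:ℕ)+1)) (lam (i:ℕ))),
          (X (Fin.last n) : MvPolynomial (Fin (n+1)) ℤ) ^ (lam n + ∑ i : Fin n, (lam (i:ℕ) - g i)) *
            rename Fin.castSucc (bialternant n (mu n g)) := by
  classical
  set R := MvPolynomial (Fin (n+1)) ℤ
  set y : R := X (Fin.last n) with hy
  -- step 1 : bialternant as det of stepMat 0
  have h0 : bialternant (n+1) lam = (stepMat n lam 0).det := by
    rw [bialternant_eq_det]
    congr 1
  rw [h0, ← stepMat_fix n lam n le_rfl]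
  -- step 2 : last row of stepMat n is (0, ..., 0, y^(lam n))
  have hrow : ∀ j : Fin (n+1), j ≠ Fin.last n → stepMat n lam n (Fin.last n) j = 0 := by
    intro j hj
    have hjn : (j : ℕ) < n := Fin.val_lt_last hj
    have hkey : lam (j:ℕ) - lam ((j:ℕ)+1) + 1 + (lam ((j:ℕ)+1) + (n - ((j:ℕ)+1)))
        = lam (j:ℕ) + (n - (j:ℕ)) := by
      have := hpart (j:ℕ) ((j:ℕ)+1) (Nat.le_succ _)
      omega
    simp only [stepMat, Matrix.of_apply, if_pos hjn]
    rw [← pow_add, hkey, sub_self]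
  -- step 3 : Laplace expansion along the last row
  rw [Matrix.det_succ_row (stepMat n lam n) (Fin.last n)]
  rw [Finset.sum_eq_single (Fin.last n)
      (fun j _ hj => by rw [hrow j hj]; ring)
      (fun h => absurd (Finset.mem_univ _) h)]
  have hlast : stepMat n lam n (Fin.last n) (Fin.last n) = y ^ lam n := by
    simp [stepMat, hy]
  have hsign : ((-1 : R)) ^ ((Fin.last n : ℕ) + (Fin.last n : ℕ)) = 1 :=
    Even.neg_one_pow ⟨(Fin.last n : ℕ), by ring⟩
  rw [hlast, hsign, one_mul]
  -- step 4/5 : the minor, rewritten via telescoping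
  have minor_eq : (stepMat n lam n).submatrix (Fin.last n).succAbove (Fin.last n).succAbove =
      Matrix.of (fun i j : Fin n => (X i.castSucc - y) *
        ∑ m ∈ Finset.Icc (lam ((j:ℕ)+1)) (lam (j:ℕ)),
          y ^ (lam (j:ℕ) - m) * (X i.castSucc : R) ^ (m + (n - 1 - (j:ℕ)))) := by
    apply Matrix.ext
    intro i j
    rw [Matrix.submatrix_apply, Fin.succAbove_last]
    have hb : lam ((j:ℕ)+1) ≤ lam (j:ℕ) := hpart _ _ (Nat.le_succ _)
    rw [Matrix.of_apply, telescope (X i.castSucc) y (n - 1 - (j:ℕ)) (lam (j:ℕ)) (lam ((j:ℕ)+1)) hb]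
    have e1 : lam (j:ℕ) + 1 + (n - 1 - (j:ℕ)) = lam (j:ℕ) + (n - (j:ℕ)) := by
      have := j.isLt; omega
    have e2 : lam ((j:ℕ)+1) + (n - 1 - (j:ℕ)) = lam ((j:ℕ)+1) + (n - ((j:ℕ)+1)) := by
      have := j.isLt; omega
    rw [e1, e2]
    simp only [stepMat, Matrix.of_apply]
    rw [if_pos (by simpa using j.isLt)]
    rfl
  erw [minor_eq, Matrix.det_mul_column]
  -- step 7 : expand det multilinearly in the rows of the transpose
  have htrans : Matrix.det (n := Fin n) (fun i j =>
        ∑ m ∈ Finset.Icc (lam ((j:ℕ)+1)) (lam (j:ℕ)),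
          y ^ (lam (j:ℕ) - m) * (X i.castSucc : R) ^ (m + (n - 1 - (j:ℕ)))) =
      Matrix.det (Matrix.of fun j i : Fin n =>
        ∑ m ∈ Finset.Icc (lam ((j:ℕ)+1)) (lam (j:ℕ)),
          y ^ (lam (j:ℕ) - m) * (X i.castSucc : R) ^ (m + (n - 1 - (j:ℕ)))) := by
    rw [← Matrix.det_transpose]
    rfl
  rw [htrans]
  have hexpand : Matrix.det (Matrix.of fun j i : Fin n =>
        ∑ m ∈ Finset.Icc (lam ((j:ℕ)+1)) (lam (j:ℕ)),
          y ^ (lam (j:ℕ) - m) * (X i.castSucc : R) ^ (m + (n - 1 - (j:ℕ)))) =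
      ∑ g ∈ Fintype.piFinset (fun i : Fin n => Finset.Icc (lam ((i:ℕ)+1)) (lam (i:ℕ))),
        Matrix.det (Matrix.of fun j i : Fin n =>
          y ^ (lam (j:ℕ) - g j) * (X i.castSucc : R) ^ (g j + (n - 1 - (j:ℕ)))) := by
    have := (Matrix.detRowAlternating (n := Fin n) (R := R)).toMultilinearMap.map_sum_finset
      (g := fun (j : Fin n) (m : ℕ) => (fun i : Fin n => y ^ (lam (j:ℕ) - m) * (X i.castSucc : R) ^ (m + (n - 1 - (j:ℕ)))))
      (A := fun j : Fin n => Finset.Icc (lam ((j:ℕ)+1)) (lam (j:ℕ)))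
    rw [show (Matrix.of fun j i : Fin n =>
        ∑ m ∈ Finset.Icc (lam ((j:ℕ)+1)) (lam (j:ℕ)),
          y ^ (lam (j:ℕ) - m) * (X i.castSucc : R) ^ (m + (n - 1 - (j:ℕ)))) =
      (fun (j : Fin n) => ∑ m ∈ Finset.Icc (lam ((j:ℕ)+1)) (lam (j:ℕ)),
          (fun i : Fin n => y ^ (lam (j:ℕ) - m) * (X i.castSucc : R) ^ (m + (n - 1 - (j:ℕ))))) from by
        funext j i
        rw [Finset.sum_apply]
        rfl]
    exact this
  rw [hexpand]
  -- step 8/9 : evaluate each summand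
  have hterm : ∀ g ∈ Fintype.piFinset (fun i : Fin n => Finset.Icc (lam ((i:ℕ)+1)) (lam (i:ℕ))),
      Matrix.det (Matrix.of fun j i : Fin n =>
          y ^ (lam (j:ℕ) - g j) * (X i.castSucc : R) ^ (g j + (n - 1 - (j:ℕ)))) =
      y ^ (∑ i : Fin n, (lam (i:ℕ) - g i)) * rename Fin.castSucc (bialternant n (mu n g)) := by
    intro g _
    erw [Matrix.det_mul_column (fun j : Fin n => y ^ (lam (j:ℕ) - g j)),
      Finset.prod_pow_eq_pow_sum]
    congr 1
    rw [bialternant_eq_det, AlgHom.map_det]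
    rw [← Matrix.det_transpose]
    congr 1
    apply Matrix.ext
    intro j i
    simp only [Matrix.transpose_apply, AlgHom.mapMatrix_apply, Matrix.map_apply,
      Matrix.of_apply, map_pow, rename_X]
    congr 2
    simp [mu]
  rw [Finset.sum_congr rfl hterm, mul_left_comm, Finset.mul_sum]
  refine congrArg (_ * ·) (Finset.sum_congr rfl fun g _ => ?_)
  rw [pow_add]
  ring

theorem claimC (n : ℕ) :
    vandermonde (n+1) =
      (∏ i : Fin n, (X i.castSucc - X (Fin.last n))) *
        rename Fin.castSucc (vandermonde n) := by
  classical
  rw [vandermonde, vandermonde, map_prod]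
  rw [← Finset.prod_filter_mul_prod_filter_not
      (Finset.univ.filter (fun p : Fin (n+1) × Fin (n+1) => p.1 < p.2))
      (fun p => p.2 = Fin.last n)]
  congr 1
  · -- pairs (i, last)
    rw [Finset.filter_filter]
    rw [show Finset.univ.filter (fun p : Fin (n+1) × Fin (n+1) => p.1 < p.2 ∧ p.2 = Fin.last n)
        = Finset.univ.map ⟨fun i : Fin n => (i.castSucc, Fin.last n),
            fun a b h => by simpa [Prod.ext_iff] using h⟩ from ?_]
    · rw [Finset.prod_map]
      rfl
    · ext ⟨a, b⟩
      simp only [Finset.mem_filter, Finset.mem_univ, true_and, Finset.mem_map,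
        Function.Embedding.coeFn_mk, Prod.mk.injEq]
      constructor
      · rintro ⟨hab, rfl⟩
        obtain ⟨i, rfl⟩ := Fin.exists_castSucc_eq.2 (Fin.ne_last_of_lt hab)
        exact ⟨i, rfl⟩
      · rintro ⟨i, h⟩
        obtain ⟨rfl, rfl⟩ := Prod.mk.inj h
        exact ⟨Fin.castSucc_lt_last i, rfl⟩
  · -- pairs with both < last
    rw [Finset.filter_filter]
    rw [show Finset.univ.filter (fun p : Fin (n+1) × Fin (n+1) => p.1 < p.2 ∧ ¬ p.2 = Fin.last n)
        = (Finset.univ.filter (fun p : Fin n × Fin n => p.1 < p.2)).map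
            ⟨fun p : Fin n × Fin n => (p.1.castSucc, p.2.castSucc),
              fun a b h => by
                simpa [Prod.ext_iff, Fin.castSucc_inj, Prod.ext_iff] using h⟩ from ?_]
    · rw [Finset.prod_map]
      refine Finset.prod_congr rfl fun p _ => ?_
      rw [map_sub, rename_X, rename_X]
      rfl
    · ext ⟨a, b⟩
      simp only [Finset.mem_filter, Finset.mem_univ, true_and, Finset.mem_map,
        Function.Embedding.coeFn_mk, Prod.mk.injEq]
      constructor
      · rintro ⟨hab, hbl⟩
        obtain ⟨j, rfl⟩ := Fin.exists_castSucc_eq.2 hbl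
        obtain ⟨i, rfl⟩ := Fin.exists_castSucc_eq.2 (Fin.ne_last_of_lt hab)
        exact ⟨(i, j), by simpa using hab, rfl⟩
      · rintro ⟨⟨i, j⟩, hij, h⟩
        obtain ⟨rfl, rfl⟩ := Prod.mk.inj h
        simp only [Finset.mem_filter, Finset.mem_univ, true_and] at hij
        exact ⟨by simpa using hij, by simp [Fin.ext_iff]; omega⟩

section PartI
variable {n : ℕ} {lam : ℕ → ℕ}

/-- number of entries `≤ n` in row `i` of a tableau with entries in `{1,…,n+1}` -/
def glT (n : ℕ) {lam : ℕ → ℕ} (T : SSYT lam (n+1)) (i : ℕ) : ℕ :=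
  ((Finset.range (lam i)).filter (fun j => T.entry i j ≤ n)).card

theorem glT_le (T : SSYT lam (n+1)) (i : ℕ) : glT n T i ≤ lam i := by
  simpa [glT] using (Finset.card_filter_le (Finset.range (lam i)) _)

theorem glT_prefix (T : SSYT lam (n+1)) (i j : ℕ) (hj : j < lam i) :
    T.entry i j ≤ n ↔ j < glT n T i := by
  classical
  set S := (Finset.range (lam i)).filter (fun j => T.entry i j ≤ n) with hS
  constructor
  · intro h
    have hsub : Finset.range (j+1) ⊆ S := by
      intro y hy
      have hyj : y ≤ j := Nat.lt_succ_iff.1 (Finset.mem_range.1 hy)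
      refine Finset.mem_filter.2 ⟨Finset.mem_range.2 (lt_of_le_of_lt hyj hj), ?_⟩
      exact le_trans (T.rowWeak i y j hyj hj) h
    have := Finset.card_le_card hsub
    simpa [glT, ← hS] using this
  · intro h
    by_contra hc
    have hsub : S ⊆ Finset.range j := by
      intro y hy
      obtain ⟨hy1, hy2⟩ := Finset.mem_filter.1 hy
      by_contra hyj
      have hjy : j ≤ y := not_lt.1 fun hl => hyj (Finset.mem_range.2 hl)
      exact hc (le_trans (T.rowWeak i j y hjy (Finset.mem_range.1 hy1)) hy2)
    have := Finset.card_le_card hsub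
    simp only [Finset.card_range] at this
    have : glT n T i ≤ j := by simpa [glT, ← hS] using this
    omega
  
theorem glT_zero (T : SSYT lam (n+1)) (hpart : ∀ i j, i ≤ j → lam j ≤ lam i)
    (hlen : ∀ i, n + 1 ≤ i → lam i = 0) (i : ℕ) (hi : n ≤ i) : glT n T i = 0 := by
  rw [glT, Finset.card_eq_zero, Finset.filter_eq_empty_iff]
  intro j hj
  have hj' := Finset.mem_range.1 hj
  have hlow := T.entry_lb hpart i j hj'
  have : i < n + 1 := by
    by_contra hc
    rw [hlen i (not_lt.1 hc)] at hj'
    omega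
  omega

theorem glT_lower (T : SSYT lam (n+1)) (hpart : ∀ i j, i ≤ j → lam j ≤ lam i)
    (i : ℕ) : lam (i+1) ≤ glT n T i := by
  classical
  have hsub : Finset.range (lam (i+1)) ⊆
      (Finset.range (lam i)).filter (fun j => T.entry i j ≤ n) := by
    intro j hj
    have hj' := Finset.mem_range.1 hj
    have hji : j < lam i := lt_of_lt_of_le hj' (hpart i (i+1) (Nat.le_succ i))
    refine Finset.mem_filter.2 ⟨Finset.mem_range.2 hji, ?_⟩
    have h1 := T.colStrict i (i+1) j (Nat.lt_succ_self i) hji hj'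
    have h2 := (T.pos (i+1) j hj').2
    omega
  simpa [glT] using Finset.card_le_card hsub

/-- restriction of a tableau to entries `≤ n` -/
def SSYT.restrict (T : SSYT lam (n+1)) : SSYT (glT n T) n where
  entry i j := if j < glT n T i then T.entry i j else 0
  pos i j hj := by
    have hj' : j < lam i := lt_of_lt_of_le hj (glT_le T i)
    rw [if_pos hj]
    exact ⟨(T.pos i j hj').1, (glT_prefix T i j hj').2 hj⟩
  zero i j hj := if_neg hj
  rowWeak i j j' hjj hj' := by
    have hj : j < glT n T i := lt_of_le_of_lt hjj hj'
    rw [if_pos hj, if_pos hj']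
    exact T.rowWeak i j j' hjj (lt_of_lt_of_le hj' (glT_le T i))
  colStrict i i' j hii hj hj' := by
    rw [if_pos hj, if_pos hj']
    exact T.colStrict i i' j hii (lt_of_lt_of_le hj (glT_le T i))
      (lt_of_lt_of_le hj' (glT_le T i'))

theorem mu_le_lam {g : Fin n → ℕ} (hg : ∀ i : Fin n, g i ≤ lam (i:ℕ)) (i : ℕ) :
    mu n g i ≤ lam i := by
  unfold mu
  split
  · exact hg _
  · exact Nat.zero_le _

theorem lam_le_mu (hpart : ∀ i j, i ≤ j → lam j ≤ lam i)
    (hlen : ∀ i, n + 1 ≤ i → lam i = 0)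
    {g : Fin n → ℕ} (hg : ∀ i : Fin n, lam ((i:ℕ)+1) ≤ g i)
    (i i' : ℕ) (h : i < i') : lam i' ≤ mu n g i := by
  unfold mu
  split
  · rename_i hi
    exact le_trans (hpart _ _ h) (hg ⟨i, hi⟩)
  · rename_i hi
    have : n + 1 ≤ i' := by omega
    rw [hlen i' this]

/-- extend a tableau of shape `mu g` with entries in `{1,…,n}` to one of shape `lam`
by filling with `n+1` -/
def SSYT.extend (hpart : ∀ i j, i ≤ j → lam j ≤ lam i)
    (hlen : ∀ i, n + 1 ≤ i → lam i = 0) (g : Fin n → ℕ) (hg1 : ∀ i : Fin n, lam ((i:ℕ)+1) ≤ g i)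
    (hg2 : ∀ i : Fin n, g i ≤ lam (i:ℕ)) (T' : SSYT (mu n g) n) : SSYT lam (n+1) where
  entry i j := if j < mu n g i then T'.entry i j else if j < lam i then n+1 else 0
  pos i j hj := by
    by_cases h : j < mu n g i
    · rw [if_pos h]
      exact ⟨(T'.pos i j h).1, le_trans (T'.pos i j h).2 (Nat.le_succ n)⟩
    · rw [if_neg h, if_pos hj]
      omega
  zero i j hj := by
    rw [if_neg (fun h => hj (lt_of_lt_of_le h (mu_le_lam hg2 i))), if_neg hj]
  rowWeak i j j' hjj hj' := by
    by_cases h2 : j' < mu n g i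
    · rw [if_pos h2, if_pos (lt_of_le_of_lt hjj h2)]
      exact T'.rowWeak i j j' hjj h2
    · rw [if_neg h2, if_pos hj']
      by_cases h1 : j < mu n g i
      · rw [if_pos h1]
        exact le_trans (le_trans (T'.pos i j h1).2 (Nat.le_succ n)) (le_refl _)
      · rw [if_neg h1, if_pos (lt_of_le_of_lt hjj hj')]
  colStrict i i' j hii hj hj' := by
    have h1 : j < mu n g i := lt_of_lt_of_le hj' (lam_le_mu hpart hlen hg1 i i' hii)
    rw [if_pos h1]
    by_cases h2 : j < mu n g i'
    · rw [if_pos h2]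
      exact T'.colStrict i i' j hii h1 h2
    · rw [if_neg h2, if_pos hj']
      exact Nat.lt_succ_of_le (T'.pos i j h1).2

theorem glT_extend (hpart : ∀ i j, i ≤ j → lam j ≤ lam i)
    (hlen : ∀ i, n + 1 ≤ i → lam i = 0) (g : Fin n → ℕ) (hg1 : ∀ i : Fin n, lam ((i:ℕ)+1) ≤ g i)
    (hg2 : ∀ i : Fin n, g i ≤ lam (i:ℕ)) (T' : SSYT (mu n g) n) :
    glT n (SSYT.extend hpart hlen g hg1 hg2 T') = mu n g := by
  funext i
  rw [glT]
  have : ((Finset.range (lam i)).filter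
      (fun j => (SSYT.extend hpart hlen g hg1 hg2 T').entry i j ≤ n)) = Finset.range (mu n g i) := by
    ext j
    simp only [Finset.mem_filter, Finset.mem_range]
    simp only [SSYT.extend]
    constructor
    · rintro ⟨hj, hle⟩
      by_contra hc
      rw [if_neg hc, if_pos hj] at hle
      omega
    · intro hj
      have hjl : j < lam i := lt_of_lt_of_le hj (mu_le_lam hg2 i)
      rw [if_pos hj]
      exact ⟨hjl, (T'.pos i j hj).2⟩
  rw [this, Finset.card_range]

theorem extend_injective (hpart : ∀ i j, i ≤ j → lam j ≤ lam i)
    (hlen : ∀ i, n + 1 ≤ i → lam i = 0) (g : Fin n → ℕ) (hg1 : ∀ i : Fin n, lam ((i:ℕ)+1) ≤ g i)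
    (hg2 : ∀ i : Fin n, g i ≤ lam (i:ℕ)) :
    Function.Injective (SSYT.extend hpart hlen g hg1 hg2) := by
  intro T1 T2 h
  apply SSYT.ext'
  funext i j
  by_cases hj : j < mu n g i
  · have := congrFun (congrFun (congrArg SSYT.entry h) i) j
    simp only [SSYT.extend, if_pos hj] at this
    exact this
  · rw [T1.zero i j hj, T2.zero i j hj]

theorem extend_glT (hpart : ∀ i j, i ≤ j → lam j ≤ lam i)
    (hlen : ∀ i, n + 1 ≤ i → lam i = 0) (T : SSYT lam (n+1)) (g : Fin n → ℕ)
    (hgT : ∀ i : Fin n, glT n T (i:ℕ) = g i)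
    (hg1 : ∀ i : Fin n, lam ((i:ℕ)+1) ≤ g i) (hg2 : ∀ i : Fin n, g i ≤ lam (i:ℕ))
    (hmu : mu n g = glT n T) :
    SSYT.extend hpart hlen g hg1 hg2 ((SSYT.restrict T).copy hmu.symm) = T := by
  apply SSYT.ext'
  funext i j
  simp only [SSYT.extend, SSYT.copy_entry, SSYT.restrict, hmu]
  by_cases h1 : j < glT n T i
  · rw [if_pos h1, if_pos h1]
  · rw [if_neg h1]
    by_cases h2 : j < lam i
    · rw [if_pos h2]
      have hnle : ¬ T.entry i j ≤ n := fun h => h1 ((glT_prefix T i j h2).1 h)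
      have := (T.pos i j h2).2
      omega
    · rw [if_neg h2, T.zero i j h2]

theorem mu_glT (hpart : ∀ i j, i ≤ j → lam j ≤ lam i)
    (hlen : ∀ i, n + 1 ≤ i → lam i = 0) (T : SSYT lam (n+1)) :
    mu n (fun i : Fin n => glT n T (i:ℕ)) = glT n T := by
  funext i
  unfold mu
  split
  · rfl
  · rename_i h
    rw [glT_zero T hpart hlen i (by omega)]
end PartI

section Weights
variable {n : ℕ} {lam : ℕ → ℕ}

theorem mu_vanish (g : Fin n → ℕ) : ∀ i, n ≤ i → mu n g i = 0 := by
  intro i hi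
  unfold mu
  rw [dif_neg (by omega)]

theorem wt_extend_le (hpart : ∀ i j, i ≤ j → lam j ≤ lam i)
    (hlen : ∀ i, n + 1 ≤ i → lam i = 0) (g : Fin n → ℕ)
    (hg1 : ∀ i : Fin n, lam ((i:ℕ)+1) ≤ g i) (hg2 : ∀ i : Fin n, g i ≤ lam (i:ℕ))
    (T' : SSYT (mu n g) n) (k : ℕ) (hk : k ≤ n) :
    (SSYT.extend hpart hlen g hg1 hg2 T').wt k = T'.wt k := by
  classical
  rw [SSYT.wt_eq_sum _ (n+1) hlen k,
    SSYT.wt_eq_sum _ (n+1) (fun i hi => mu_vanish g i (by omega)) k]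
  refine Finset.sum_congr rfl fun i _ => ?_
  congr 1
  ext j
  simp only [Finset.mem_filter, Finset.mem_range]
  simp only [SSYT.extend]
  constructor
  · rintro ⟨hj, he⟩
    by_cases h : j < mu n g i
    · rw [if_pos h] at he
      exact ⟨h, he⟩
    · rw [if_neg h, if_pos hj] at he
      omega
  · rintro ⟨hj, he⟩
    have hjl : j < lam i := lt_of_lt_of_le hj (mu_le_lam hg2 i)
    rw [if_pos hj]
    exact ⟨hjl, he⟩

theorem wt_extend_top (hpart : ∀ i j, i ≤ j → lam j ≤ lam i)
    (hlen : ∀ i, n + 1 ≤ i → lam i = 0) (g : Fin n → ℕ)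
    (hg1 : ∀ i : Fin n, lam ((i:ℕ)+1) ≤ g i) (hg2 : ∀ i : Fin n, g i ≤ lam (i:ℕ))
    (T' : SSYT (mu n g) n) :
    (SSYT.extend hpart hlen g hg1 hg2 T').wt (n+1) = lam n + ∑ i : Fin n, (lam (i:ℕ) - g i) := by
  classical
  rw [SSYT.wt_eq_sum _ (n+1) hlen (n+1)]
  have hrow : ∀ i, ((Finset.range (lam i)).filter
      (fun j => (SSYT.extend hpart hlen g hg1 hg2 T').entry i j = n+1)).card
      = lam i - mu n g i := by
    intro i
    have : ((Finset.range (lam i)).filter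
        (fun j => (SSYT.extend hpart hlen g hg1 hg2 T').entry i j = n+1))
        = Finset.range (lam i) \ Finset.range (mu n g i) := by
      ext j
      simp only [Finset.mem_filter, Finset.mem_range, Finset.mem_sdiff]
      simp only [SSYT.extend]
      constructor
      · rintro ⟨hj, he⟩
        refine ⟨hj, fun h => ?_⟩
        rw [if_pos h] at he
        have := (T'.pos i j h).2
        omega
      · rintro ⟨hj, h⟩
        rw [if_neg h, if_pos hj]
        exact ⟨hj, rfl⟩
    rw [this, Finset.card_sdiff_of_subset (by
      intro x hx
      exact Finset.mem_range.2 (lt_of_lt_of_le (Finset.mem_range.1 hx) (mu_le_lam hg2 i)))]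
    simp
  rw [Finset.sum_congr rfl (fun i _ => hrow i), Finset.sum_range_succ]
  rw [mu_vanish g n le_rfl, Nat.sub_zero, add_comm]
  congr 1
  rw [Finset.sum_range fun i => lam i - mu n g i]
  refine Finset.sum_congr rfl fun i _ => ?_
  congr 1
  unfold mu
  rw [dif_pos i.isLt]

theorem ssytMonomial_split (T : SSYT lam (n+1)) :
    ssytMonomial T = (X (Fin.last n) : MvPolynomial (Fin (n+1)) ℤ) ^ (T.wt (n+1)) *
      ∏ i : Fin n, (X i.castSucc : MvPolynomial (Fin (n+1)) ℤ) ^ (T.wt ((i:ℕ)+1)) := by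
  rw [ssytMonomial, Fin.prod_univ_castSucc, mul_comm]
  simp

theorem rename_ssytMonomial {lam' : ℕ → ℕ} (T' : SSYT lam' n) :
    rename Fin.castSucc (ssytMonomial T') =
      ∏ i : Fin n, (X i.castSucc : MvPolynomial (Fin (n+1)) ℤ) ^ (T'.wt ((i:ℕ)+1)) := by
  rw [ssytMonomial, map_prod]
  refine Finset.prod_congr rfl fun i _ => ?_
  rw [map_pow, rename_X]
end Weights

theorem claimA (n : ℕ) (lam : ℕ → ℕ) (hpart : ∀ i j, i ≤ j → lam j ≤ lam i)
    (hlen : ∀ i, n + 1 ≤ i → lam i = 0) :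
    ∑ᶠ T : SSYT lam (n+1), ssytMonomial T =
      ∑ g ∈ Fintype.piFinset (fun i : Fin n => Finset.Icc (lam ((i:ℕ)+1)) (lam (i:ℕ))),
        (X (Fin.last n) : MvPolynomial (Fin (n+1)) ℤ) ^ (lam n + ∑ i : Fin n, (lam (i:ℕ) - g i)) *
          rename Fin.castSucc (∑ᶠ T' : SSYT (mu n g) n, ssytMonomial T') := by
  classical
  haveI hfin : Finite (SSYT lam (n+1)) := SSYT.finite lam (n+1) (n+1) hlen
  set Mset := Fintype.piFinset (fun i : Fin n => Finset.Icc (lam ((i:ℕ)+1)) (lam (i:ℕ))) with hM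
  set S : (Fin n → ℕ) → Set (SSYT lam (n+1)) :=
    fun g => {T | (fun i : Fin n => glT n T (i:ℕ)) = g} with hSdef
  have hcover : (⋃ g ∈ (Mset : Set (Fin n → ℕ)), S g) = Set.univ := by
    ext T
    simp only [Set.mem_iUnion, Set.mem_univ, iff_true, Finset.mem_coe]
    refine ⟨fun i : Fin n => glT n T (i:ℕ), ?_, rfl⟩
    exact Fintype.mem_piFinset.2 fun i =>
      Finset.mem_Icc.2 ⟨glT_lower T hpart (i:ℕ), glT_le T (i:ℕ)⟩
  have hdisj : (Mset : Set (Fin n → ℕ)).PairwiseDisjoint S := by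
    intro a _ b _ hab
    rw [Function.onFun, Set.disjoint_left]
    rintro T (hTa : _ = a) (hTb : _ = b)
    exact hab (hTa ▸ hTb)
  rw [← finsum_mem_univ, ← hcover,
    finsum_mem_biUnion hdisj (Mset.finite_toSet) (fun g _ => Set.toFinite _),
    finsum_mem_coe_finset]
  refine Finset.sum_congr rfl fun g hg => ?_
  have hg' := Fintype.mem_piFinset.1 hg
  have hg1 : ∀ i : Fin n, lam ((i:ℕ)+1) ≤ g i := fun i => (Finset.mem_Icc.1 (hg' i)).1
  have hg2 : ∀ i : Fin n, g i ≤ lam (i:ℕ) := fun i => (Finset.mem_Icc.1 (hg' i)).2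
  have hrange : S g = Set.range (SSYT.extend hpart hlen g hg1 hg2) := by
    ext T
    constructor
    · intro hT
      have hT' : (fun i : Fin n => glT n T (i:ℕ)) = g := hT
      have hgT : ∀ i : Fin n, glT n T (i:ℕ) = g i := fun i => congrFun hT' i
      have hmu : mu n g = glT n T := by
        have := mu_glT hpart hlen T
        rwa [hT'] at this
      exact ⟨(T.restrict).copy hmu.symm, extend_glT hpart hlen T g hgT hg1 hg2 hmu⟩
    · rintro ⟨T', rfl⟩
      show (fun i : Fin n => glT n _ (i:ℕ)) = g
      funext i
      rw [show glT n (SSYT.extend hpart hlen g hg1 hg2 T') = mu n g from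
        glT_extend hpart hlen g hg1 hg2 T']
      unfold mu
      rw [dif_pos i.isLt]
  rw [hrange, finsum_mem_range (extend_injective hpart hlen g hg1 hg2)]
  have hterm : ∀ T' : SSYT (mu n g) n,
      ssytMonomial (SSYT.extend hpart hlen g hg1 hg2 T') =
        (X (Fin.last n) : MvPolynomial (Fin (n+1)) ℤ) ^ (lam n + ∑ i : Fin n, (lam (i:ℕ) - g i)) *
          rename Fin.castSucc (ssytMonomial T') := by
    intro T'
    rw [ssytMonomial_split, wt_extend_top hpart hlen g hg1 hg2 T', rename_ssytMonomial]
    congr 1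
    refine Finset.prod_congr rfl fun i _ => ?_
    rw [wt_extend_le hpart hlen g hg1 hg2 T' ((i:ℕ)+1) (by omega)]
  rw [finsum_congr hterm]
  haveI : Finite (SSYT (mu n g) n) := SSYT.finite _ n n (mu_vanish g)
  letI : Fintype (SSYT (mu n g) n) := Fintype.ofFinite _
  rw [finsum_eq_sum_of_fintype, finsum_eq_sum_of_fintype, map_sum, Finset.mul_sum]

/-- **Littlewood's formula.**  For a partition `λ` (with at most `n` parts), the Schur
polynomial `s_λ = j_λ / v_n` equals the generating function of semistandard Young tableaux
of shape `λ` with entries in `{1, …, n}`; equivalently,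
`j_λ = v_n · ∑_{T ∈ SSYT(λ,n)} x^{wt(T)}`. -/
theorem schur_bialternant_eq_ssyt_generating_function
    (n : ℕ) (lam : ℕ → ℕ)
    (hpart : ∀ i j, i ≤ j → lam j ≤ lam i)
    (hlen : ∀ i, n ≤ i → lam i = 0) :
    bialternant n lam = vandermonde n * ∑ᶠ T : SSYT lam n, ssytMonomial T := by
  induction n generalizing lam with
  | zero =>
    have hb : bialternant 0 lam = 1 := by
      rw [bialternant]
      rw [Finset.univ_unique, Finset.sum_singleton]
      simp
    have hv : vandermonde 0 = 1 := by
      rw [vandermonde]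
      apply Finset.prod_eq_one
      intro p hp
      exact p.1.elim0
    have hvac : ∀ i j : ℕ, ¬ j < lam i := by
      intro i j
      rw [hlen i (Nat.zero_le i)]
      omega
    let T0 : SSYT lam 0 :=
      ⟨fun _ _ => 0, fun i j hj => absurd hj (hvac i j), fun _ _ _ => rfl,
        fun i j j' _ hj' => absurd hj' (hvac i j'), fun i i' j _ hj _ => absurd hj (hvac i j)⟩
    haveI : Unique (SSYT lam 0) :=
      { default := T0
        uniq := fun T => SSYT.ext' (funext fun i => funext fun j => T.zero i j (hvac i j)) }
    rw [hb, hv, finsum_unique, one_mul]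
    rw [ssytMonomial]
    exact (Finset.prod_of_isEmpty _).symm
  | succ n ih =>
    rw [claimB n lam hpart, claimC n, claimA n lam hpart hlen]
    have hterm : ∀ g ∈ Fintype.piFinset (fun i : Fin n => Finset.Icc (lam ((i:ℕ)+1)) (lam (i:ℕ))),
        (X (Fin.last n) : MvPolynomial (Fin (n+1)) ℤ) ^ (lam n + ∑ i : Fin n, (lam (i:ℕ) - g i)) *
            rename Fin.castSucc (bialternant n (mu n g)) =
        rename Fin.castSucc (vandermonde n) *
          ((X (Fin.last n) : MvPolynomial (Fin (n+1)) ℤ) ^ (lam n + ∑ i : Fin n, (lam (i:ℕ) - g i)) *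
            rename Fin.castSucc (∑ᶠ T' : SSYT (mu n g) n, ssytMonomial T')) := by
      intro g hg
      have hg' := Fintype.mem_piFinset.1 hg
      have hpart' : ∀ i j, i ≤ j → mu n g j ≤ mu n g i := by
        intro i j hij
        unfold mu
        split
        · rename_i hj
          split
          · rename_i hi
            rcases Nat.eq_or_lt_of_le hij with h | h
            · subst h; exact le_refl _
            · calc g ⟨j, hj⟩ ≤ lam j := (Finset.mem_Icc.1 (hg' ⟨j, hj⟩)).2
                _ ≤ lam (i+1) := hpart (i+1) j h
                _ ≤ g ⟨i, hi⟩ := (Finset.mem_Icc.1 (hg' ⟨i, hi⟩)).1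
          · omega
        · exact Nat.zero_le _
      have := ih (mu n g) hpart' (mu_vanish g)
      rw [this, map_mul]
      ring
    rw [Finset.sum_congr rfl hterm, ← Finset.mul_sum]
    ring
end

section
/- Let α be a strong composition that admits at least one α-compatible sequence, let β(α) be its termwise-maximal α-compatible sequence, and let a(α) be the weak composition whose i-th entry is the multiplicity of i in β(α). Then ∑_{β ⟲ α} ∏_i x_{β_i} = ∑_b x^b, where the right-hand sum is over all weak compositions b with b ≥ a(α) in dominance order and b^+ ⊨ a(α)^+. In particular, the fundamental slide polynomial 𝔉_{a(α)} := ∑_{β ⟲ α} ∏_i x_{β_i} depends only on the weak composition a(α). -/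
open MvPolynomial

/-- The monomial `x^b` (1-indexed variables) associated to a weak composition recorded
as a list. -/
noncomputable def xlistN (b : List ℕ) : MvPolynomial ℕ ℤ :=
  ∏ i ∈ Finset.range b.length, X (i + 1) ^ b.getD i 0

/-- `b` has no trailing zeros (canonical representative of a weak composition). -/
def NTZ (b : List ℕ) : Prop := b.getLast? ≠ some 0

/-- Dominance order on weak compositions: every partial sum of `b` is at least the
corresponding partial sum of `a`. -/
def DomL (b a : List ℕ) : Prop := ∀ k, (a.take k).sum ≤ (b.take k).sum

/-- The positive part of a weak composition: delete all zero entries. -/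
def posL (b : List ℕ) : List ℕ := b.filter (fun x => x ≠ 0)

/-- `β` refines `α`: `α` is obtained by summing consecutive (nonempty) blocks of `β`. -/
def Refines (β α : List ℕ) : Prop :=
  ∃ L : List (List ℕ), L.flatten = β ∧ L.map List.sum = α ∧ ∀ l ∈ L, l ≠ []

/-- `β` is an `α`-compatible sequence: same length, weakly increasing, `β_i ≤ α_i`, and
strictly increasing wherever `α` is. -/
def IsCompatible (β α : List ℕ) : Prop :=
  β.length = α.length ∧ (∀ x ∈ β, 0 < x) ∧ List.Chain' (· ≤ ·) β ∧
  (∀ i, i < α.length → β.getD i 0 ≤ α.getD i 0) ∧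
  (∀ i, i + 1 < α.length → α.getD i 0 < α.getD (i + 1) 0 → β.getD i 0 < β.getD (i + 1) 0)

/-- The weak composition `a(α)` whose `i`-th entry is the multiplicity of `i` in a
weakly increasing sequence `βm` (recorded without trailing zeros). -/
def multComp (βm : List ℕ) : List ℕ :=
  (List.range (βm.foldr max 0)).map (fun i => βm.count (i + 1))






-- countP of ≤ k on a sorted list counts an initial segment
lemma sorted_lt_countP {l : List ℕ} (hs : l.Pairwise (· ≤ ·)) {k : ℕ} :
    ∀ {i : ℕ}, i < l.length → (i < l.countP (fun x => x ≤ k) ↔ l.getD i 0 ≤ k) := by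
  induction l with
  | nil => intro i hi; simp at hi
  | cons x t ih =>
    rw [List.pairwise_cons] at hs
    intro i hi
    rw [List.countP_cons]
    cases i with
    | zero =>
      simp only [List.getD_cons_zero]
      constructor
      · intro h
        by_contra hx
        push_neg at hx
        have h0 : t.countP (fun y => decide (y ≤ k)) = 0 := by
          apply List.countP_eq_zero.2
          intro a ha
          have := hs.1 a ha
          simp only [decide_eq_true_eq]
          omega
        rw [h0] at h
        have hx' : ¬ (x ≤ k) := by omega
        simp [hx'] at h
      · intro h
        simp only [decide_eq_true_eq, h, if_true]
        omega
    | succ i =>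
      simp only [List.getD_cons_succ]
      simp only [List.length_cons, Nat.succ_lt_succ_iff] at hi
      rw [← ih hs.2 hi]
      by_cases hx : x ≤ k
      · simp [hx]
      · have h0 : t.countP (fun y => decide (y ≤ k)) = 0 := by
          apply List.countP_eq_zero.2
          intro a ha
          have := hs.1 a ha
          simp only [decide_eq_true_eq]
          omega
        rw [h0]
        simp only [decide_eq_true_eq, hx, if_false]
        omega

lemma cp_le_zero {l : List ℕ} (hl : ∀ x ∈ l, 0 < x) : l.countP (fun x => x ≤ 0) = 0 := by
  apply List.countP_eq_zero.2
  intro a ha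
  have := hl a ha
  simp only [decide_eq_true_eq]
  omega

lemma cp_le_length {l : List ℕ} {k : ℕ} (h : ∀ x ∈ l, x ≤ k) :
    l.countP (fun x => x ≤ k) = l.length := by
  apply List.countP_eq_length.2
  intro a ha
  simp only [decide_eq_true_eq]
  exact h a ha

-- pointwise domination gives countP domination
lemma cp_mono_pointwise : ∀ (γ β : List ℕ), β.length = γ.length →
    (∀ i < γ.length, β.getD i 0 ≤ γ.getD i 0) → ∀ k,
    γ.countP (fun x => x ≤ k) ≤ β.countP (fun x => x ≤ k) := by
  intro γ
  induction γ with
  | nil => intro β h _ k; simp at h; simp [h]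
  | cons x t ih =>
    intro β hlen hpt k
    cases β with
    | nil => simp at hlen
    | cons y s =>
      simp only [List.length_cons, Nat.add_right_cancel_iff] at hlen
      have h0 : y ≤ x := by have := hpt 0 (by simp); simpa using this
      have hrest : ∀ i < t.length, s.getD i 0 ≤ t.getD i 0 := by
        intro i hi
        have := hpt (i+1) (by simp; omega)
        simpa using this
      have := ih s hlen hrest k
      rw [List.countP_cons, List.countP_cons]
      by_cases hx : x ≤ k
      · by_cases hy : y ≤ k
        · simp [hx, hy]; omega
        · omega
      · simp only [decide_eq_true_eq, hx, if_false]
        omega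

open List

open List

def toSeq (b : List ℕ) : List ℕ :=
  (List.range b.length).flatMap (fun i => List.replicate (b.getD i 0) (i + 1))

lemma le_foldr_max {l : List ℕ} {x : ℕ} (hx : x ∈ l) : x ≤ l.foldr max 0 := by
  induction l with
  | nil => simp at hx
  | cons y t ih =>
    rcases List.mem_cons.1 hx with h | h
    · simp [h, Nat.le_max_left]
    · exact le_trans (ih h) (by simp [Nat.le_max_right])

lemma foldr_max_mem {l : List ℕ} (h : l ≠ []) : l.foldr max 0 ∈ l ∨ l.foldr max 0 = 0 := by
  induction l with
  | nil => simp at h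
  | cons y t ih =>
    by_cases ht : t = []
    · subst ht; simp
    · rcases ih ht with h' | h'
      · rcases Nat.le_total y (t.foldr max 0) with hle | hle
        · left; simp only [List.foldr_cons]
          rw [max_eq_right hle]
          exact List.mem_cons_of_mem _ h'
        · left; simp only [List.foldr_cons]
          rw [max_eq_left hle]
          exact List.mem_cons_self
      · simp only [List.foldr_cons, h']
        rcases Nat.eq_zero_or_pos y with h0 | h0
        · right; simp [h0]
        · left; simp [Nat.max_eq_left (Nat.zero_le y)]

lemma getD_multComp (l : List ℕ) (i : ℕ) :
    (multComp l).getD i 0 = if i < l.foldr max 0 then l.count (i + 1) else 0 := by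
  unfold multComp
  by_cases h : i < l.foldr max 0
  · rw [if_pos h, List.getD_eq_getElem _ _ (by simpa using h)]
    simp
  · rw [if_neg h, List.getD_eq_default]
    simpa using Nat.le_of_not_lt h

lemma length_multComp (l : List ℕ) : (multComp l).length = l.foldr max 0 := by
  simp [multComp]

lemma countP_split (m : ℕ) : ∀ l : List ℕ,
    l.countP (fun x => decide (0 < x ∧ x ≤ m)) + l.countP (fun x => x == m + 1)
      = l.countP (fun x => decide (0 < x ∧ x ≤ m + 1)) := by
  intro l
  induction l with
  | nil => simp
  | cons x t ih =>
    simp only [List.countP_cons]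
    have hx : (if (decide (0 < x ∧ x ≤ m)) = true then 1 else 0)
        + (if (x == m + 1) = true then 1 else 0)
        = (if (decide (0 < x ∧ x ≤ m + 1)) = true then 1 else 0) := by
      by_cases h1 : 0 < x ∧ x ≤ m <;> by_cases h2 : x = m + 1 <;>
        by_cases h3 : 0 < x ∧ x ≤ m + 1 <;> simp [h1, h2, h3] <;> omega
    omega

-- partial sums of multComp are countP
lemma sum_map_count_range (l : List ℕ) : ∀ m : ℕ,
    (((List.range m).map (fun i => l.count (i + 1)))).sum
      = l.countP (fun x => decide (0 < x ∧ x ≤ m)) := by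
  intro m
  induction m with
  | zero =>
    simp
    symm
    apply List.countP_eq_zero.2
    intro a _; simp; omega
  | succ m ih =>
    rw [List.range_succ, List.map_append, List.sum_append, ih]
    simp only [List.map_cons, List.map_nil, List.sum_cons, List.sum_nil]
    rw [List.count_eq_countP]
    rw [← countP_split]
    omega

lemma take_sum_multComp {l : List ℕ} (hl : ∀ x ∈ l, 0 < x) (k : ℕ) :
    ((multComp l).take k).sum = l.countP (fun x => x ≤ k) := by
  unfold multComp
  rw [← List.map_take, List.take_range, sum_map_count_range]
  apply List.countP_congr
  intro x hx
  have h1 := hl x hx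
  have h2 := le_foldr_max hx
  simp only [decide_eq_true_eq]
  omega

open List




lemma toSeq_pos {b : List ℕ} {x : ℕ} (hx : x ∈ toSeq b) : 0 < x := by
  unfold toSeq at hx
  rcases List.mem_flatMap.1 hx with ⟨i, _, hx⟩
  rw [List.eq_of_mem_replicate hx]
  omega

lemma toSeq_sorted (b : List ℕ) : (toSeq b).Pairwise (· ≤ ·) := by
  unfold toSeq
  rw [List.flatMap_def, List.pairwise_flatten]
  constructor
  · intro l hl
    rcases List.mem_map.1 hl with ⟨i, _, rfl⟩
    exact List.pairwise_replicate.2 (Or.inr le_rfl)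
  · rw [List.pairwise_map]
    apply List.Pairwise.imp ?_ List.pairwise_lt_range
    intro i j hij x hx y hy
    rw [List.eq_of_mem_replicate hx, List.eq_of_mem_replicate hy]
    omega

lemma toSeq_le_length {b : List ℕ} {x : ℕ} (hx : x ∈ toSeq b) : x ≤ b.length := by
  unfold toSeq at hx
  rcases List.mem_flatMap.1 hx with ⟨i, hi, hx⟩
  rw [List.eq_of_mem_replicate hx]
  simp at hi
  omega

lemma count_toSeq (b : List ℕ) (c : ℕ) :
    (toSeq b).count c = if 1 ≤ c ∧ c ≤ b.length then b.getD (c - 1) 0 else 0 := by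
  unfold toSeq
  rw [List.flatMap_def, List.count_flatten, List.map_map]
  have : ((List.range b.length).map
      ((List.count c) ∘ fun i => List.replicate (b.getD i 0) (i + 1))).sum
      = ∑ i ∈ Finset.range b.length, if i + 1 = c then b.getD i 0 else 0 := by
    rw [show ∀ n f, ((List.range n).map f).sum = ∑ i ∈ Finset.range n, f i from fun _ _ => rfl]
    apply Finset.sum_congr rfl
    intro i _
    simp only [Function.comp_apply, List.count_replicate]
    simp [beq_iff_eq]
  rw [this]
  by_cases hc : 1 ≤ c ∧ c ≤ b.length
  · rw [if_pos hc]
    have : ∀ i, (i + 1 = c) ↔ (i = c - 1) := by omega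
    simp only [this]
    rw [Finset.sum_ite_eq' (Finset.range b.length) (c-1) (fun i => b.getD i 0)]
    rw [if_pos (Finset.mem_range.2 (by omega))]
  · rw [if_neg hc]
    apply Finset.sum_eq_zero
    intro i hi
    simp only [Finset.mem_range] at hi
    rw [if_neg (by omega)]



lemma getLast?_eq_getD {l : List ℕ} (h : l ≠ []) :
    l.getLast? = some (l.getD (l.length - 1) 0) := by
  rw [List.getLast?_eq_getLast h, List.getLast_eq_getElem,
    List.getD_eq_getElem _ _ (by have := List.length_pos_iff.2 h; omega)]

lemma NTZ_last_pos {b : List ℕ} (hb : NTZ b) (h : b ≠ []) : 0 < b.getD (b.length - 1) 0 := by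
  rw [NTZ, getLast?_eq_getD h] at hb
  rcases Nat.eq_zero_or_pos (b.getD (b.length - 1) 0) with h0 | h0
  · exact absurd (by rw [h0]) hb
  · exact h0

lemma foldr_max_toSeq {b : List ℕ} (hb : NTZ b) : (toSeq b).foldr max 0 = b.length := by
  rcases eq_or_ne b [] with rfl | h
  · simp [toSeq]
  · apply Nat.le_antisymm
    · rcases eq_or_ne (toSeq b) [] with he | he
      · simp [he]
      · rcases foldr_max_mem he with h' | h'
        · exact toSeq_le_length h'
        · simp [h']
    · -- b.length ∈ toSeq b
      have hpos := NTZ_last_pos hb h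
      have hlen : 0 < b.length := List.length_pos_iff.2 h
      apply le_foldr_max
      unfold toSeq
      apply List.mem_flatMap.2
      refine ⟨b.length - 1, by simp; omega, ?_⟩
      rw [List.mem_replicate]
      constructor
      · omega
      · omega

lemma multComp_toSeq {b : List ℕ} (hb : NTZ b) : multComp (toSeq b) = b := by
  unfold multComp
  rw [foldr_max_toSeq hb]
  apply List.ext_getElem (by simp)
  intro n h1 h2
  simp only [List.getElem_map, List.getElem_range]
  rw [count_toSeq]
  simp only [List.length_map, List.length_range] at h1
  rw [if_pos ⟨by omega, by omega⟩]
  simp only [Nat.add_sub_cancel]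
  rw [List.getD_eq_getElem _ _ h2]

lemma toSeq_multComp {β : List ℕ} (hpos : ∀ x ∈ β, 0 < x) (hs : β.Pairwise (· ≤ ·)) :
    toSeq (multComp β) = β := by
  apply List.Perm.eq_of_pairwise' (toSeq_sorted _) hs
  rw [List.perm_iff_count]
  intro c
  rw [count_toSeq]
  rw [length_multComp]
  by_cases hc : 1 ≤ c ∧ c ≤ β.foldr max 0
  · rw [if_pos hc, getD_multComp, if_pos (by omega), show c - 1 + 1 = c by omega]
  · rw [if_neg hc]
    symm
    rw [List.count_eq_zero]
    intro hc'
    have h1 := hpos c hc'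
    have h2 := le_foldr_max hc'
    omega

lemma sum_multComp {β : List ℕ} (hpos : ∀ x ∈ β, 0 < x) :
    (multComp β).sum = β.length := by
  have h := take_sum_multComp hpos (β.foldr max 0)
  have hlen : (multComp β).length = β.foldr max 0 := length_multComp β
  rw [← hlen, List.take_length] at h
  rw [h, hlen, cp_le_length (fun x hx => le_foldr_max hx)]

lemma NTZ_multComp {β : List ℕ} (hpos : ∀ x ∈ β, 0 < x) : NTZ (multComp β) := by
  rcases eq_or_ne β [] with rfl | h
  · simp [NTZ, multComp]
  · have hM : β.foldr max 0 ∈ β := by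
      rcases foldr_max_mem h with h' | h'
      · exact h'
      · exfalso
        rcases List.exists_mem_of_ne_nil β h with ⟨x, hx⟩
        have := hpos x hx
        have := le_foldr_max hx
        omega
    have hM0 : 0 < β.foldr max 0 := hpos _ hM
    unfold NTZ multComp
    obtain ⟨m, hm⟩ : ∃ m, β.foldr max 0 = m + 1 := ⟨β.foldr max 0 - 1, by omega⟩
    rw [hm, List.range_succ, List.map_append]
    simp only [List.map_cons, List.map_nil]
    rw [List.getLast?_concat]
    have : 0 < β.count (m + 1) := List.count_pos_iff.2 (by rw [← hm]; exact hM)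
    intro hc
    simp only [Option.some.injEq] at hc
    omega

lemma posL_pos {l : List ℕ} {x : ℕ} (hx : x ∈ posL l) : 0 < x := by
  unfold posL at hx
  have := (List.mem_filter.1 hx).2
  simp at this
  omega

lemma posL_sum (l : List ℕ) : (posL l).sum = l.sum := by
  induction l with
  | nil => rfl
  | cons x t ih =>
    by_cases hx : x = 0
    · subst hx; simpa [posL] using ih
    · simp only [posL, List.filter_cons, List.sum_cons]
      simp only [hx, ne_eq, not_false_iff, decide_true, if_true]
      simp only [List.sum_cons]
      rw [show List.filter (fun x => x ≠ 0) t = posL t from rfl, ih]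

lemma posL_take_sum (l : List ℕ) : ∀ k, ∃ m, ((posL l).take k).sum = ((l.take m)).sum := by
  induction l with
  | nil => intro k; exact ⟨0, by simp [posL]⟩
  | cons x t ih =>
    intro k
    by_cases hx : x = 0
    · subst hx
      obtain ⟨m, hm⟩ := ih k
      refine ⟨m + 1, ?_⟩
      simpa [posL] using hm
    · cases k with
      | zero => exact ⟨0, by simp⟩
      | succ k =>
        obtain ⟨m, hm⟩ := ih k
        refine ⟨m + 1, ?_⟩
        simp only [posL, List.filter_cons, hx, ne_eq, not_false_iff, decide_true, if_true,
          List.take_succ_cons, List.sum_cons]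
        rw [show List.filter (fun x => x ≠ 0) t = posL t from rfl, hm]

lemma take_sum_posL (l : List ℕ) : ∀ m, ∃ k, ((l.take m)).sum = ((posL l).take k).sum := by
  induction l with
  | nil => intro m; exact ⟨0, by simp⟩
  | cons x t ih =>
    intro m
    cases m with
    | zero => exact ⟨0, by simp⟩
    | succ m =>
      obtain ⟨k, hk⟩ := ih m
      by_cases hx : x = 0
      · subst hx
        refine ⟨k, ?_⟩
        simpa [posL] using hk
      · refine ⟨k + 1, ?_⟩
        simp only [posL, List.filter_cons, hx, ne_eq, not_false_iff, decide_true, if_true,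
          List.take_succ_cons, List.sum_cons]
        rw [show List.filter (fun x => x ≠ 0) t = posL t from rfl]
        rw [hk]

lemma sum_take_le (l : List ℕ) (m : ℕ) : (l.take m).sum ≤ l.sum := by
  have := List.sum_take_add_sum_drop l m
  omega

lemma sum_take_mono (l : List ℕ) {a b : ℕ} (h : a ≤ b) :
    (l.take a).sum ≤ (l.take b).sum := by
  have : l.take a = (l.take b).take a := by rw [List.take_take, min_eq_left h]
  rw [this]
  exact sum_take_le _ _

lemma refines_of : ∀ (y x : List ℕ), (∀ v ∈ x, 0 < v) → (∀ v ∈ y, 0 < v) →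
    x.sum = y.sum → (∀ k, ∃ m, (y.take k).sum = (x.take m).sum) → Refines x y := by
  intro y
  induction y with
  | nil =>
    intro x hx _ hsum _
    cases x with
    | nil => exact ⟨[], rfl, rfl, by simp⟩
    | cons a t =>
      exfalso
      have := hx a (List.mem_cons_self)
      simp at hsum
      omega
  | cons c yt ih =>
    intro x hx hy hsum hpre
    have hc : 0 < c := hy c (List.mem_cons_self)
    obtain ⟨m, hm⟩ := hpre 1
    simp only [List.take_succ_cons, List.take_zero, List.sum_cons, List.sum_nil,
      Nat.add_zero] at hm
    have hsx : x.sum = c + yt.sum := by simpa using hsum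
    have htd := List.sum_take_add_sum_drop x m
    have hdropsum : (x.drop m).sum = yt.sum := by omega
    have hpre' : ∀ k, ∃ m', (yt.take k).sum = ((x.drop m).take m').sum := by
      intro k
      obtain ⟨m', hm'⟩ := hpre (k + 1)
      simp only [List.take_succ_cons, List.sum_cons] at hm'
      rcases Nat.le_total m m' with h | h
      · refine ⟨m' - m, ?_⟩
        have hsplit : x.take m' = x.take m ++ (x.drop m).take (m' - m) := by
          rw [← List.take_add]
          congr 1
          omega
        rw [hsplit, List.sum_append] at hm'
        omega
      · refine ⟨0, ?_⟩
        have h1 : (x.take m').sum ≤ (x.take m).sum := sum_take_mono x h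
        simp only [List.take_zero, List.sum_nil]
        omega
    obtain ⟨L, h1, h2, h3⟩ := ih (x.drop m)
      (fun v hv => hx v (List.mem_of_mem_drop hv))
      (fun v hv => hy v (List.mem_cons_of_mem _ hv)) hdropsum hpre'
    refine ⟨x.take m :: L, ?_, ?_, ?_⟩
    · simp only [List.flatten_cons, h1, List.take_append_drop]
    · simp only [List.map_cons, h2, ← hm]
    · intro l hl
      rcases List.mem_cons.1 hl with rfl | hl
      · intro hnil
        rw [hnil] at hm
        simp at hm
        omega
      · exact h3 l hl

lemma refines_sum {x y : List ℕ} (h : Refines x y) : x.sum = y.sum := by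
  obtain ⟨L, h1, h2, _⟩ := h
  rw [← h1, List.sum_flatten, h2]

lemma refines_take {x y : List ℕ} (h : Refines x y) :
    ∀ k, ∃ m, (y.take k).sum = (x.take m).sum := by
  obtain ⟨L, h1, h2, _⟩ := h
  intro k
  refine ⟨((L.take k).flatten).length, ?_⟩
  have hpre : (L.take k).flatten <+: x := by
    rw [← h1]
    conv_rhs => rw [← List.take_append_drop k L]
    rw [List.flatten_append]
    exact ⟨(L.drop k).flatten, rfl⟩
  rw [← List.prefix_iff_eq_take.1 hpre, List.sum_flatten, ← h2, ← List.map_take]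

def CompatM (β γ : List ℕ) : Prop :=
  β.length = γ.length ∧ (∀ x ∈ β, 0 < x) ∧ β.Pairwise (· ≤ ·) ∧
  (∀ i < γ.length, β.getD i 0 ≤ γ.getD i 0) ∧
  (∀ i, i + 1 < γ.length → γ.getD i 0 < γ.getD (i + 1) 0 →
    β.getD i 0 < β.getD (i + 1) 0)

lemma exists_countP_eq {γ β : List ℕ} (hγs : γ.Pairwise (· ≤ ·)) (hβs : β.Pairwise (· ≤ ·))
    (hβp : ∀ x ∈ β, 0 < x) (hlen : β.length = γ.length)
    (hbr : ∀ i, i + 1 < γ.length → γ.getD i 0 < γ.getD (i + 1) 0 →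
      β.getD i 0 < β.getD (i + 1) 0)
    (k : ℕ) : ∃ m, γ.countP (fun x => x ≤ k) = β.countP (fun x => x ≤ m) := by
  set c := γ.countP (fun x => x ≤ k) with hc
  rcases Nat.eq_zero_or_pos c with h0 | h0
  · exact ⟨0, by rw [h0, cp_le_zero hβp]⟩
  rcases Nat.lt_or_ge c γ.length with hn | hn
  · have hc1 : γ.getD (c - 1) 0 ≤ k := (sorted_lt_countP hγs (by omega)).1 (by omega)
    have hc2 : ¬ (γ.getD c 0 ≤ k) := fun h =>
      absurd ((sorted_lt_countP hγs hn).2 h) (by omega)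
    have hbreak : γ.getD (c - 1) 0 < γ.getD (c - 1 + 1) 0 := by
      rw [show c - 1 + 1 = c by omega]
      omega
    have hb := hbr (c - 1) (by omega) hbreak
    rw [show c - 1 + 1 = c by omega] at hb
    refine ⟨β.getD (c - 1) 0, ?_⟩
    have hA : c - 1 < β.countP (fun x => x ≤ β.getD (c - 1) 0) :=
      (sorted_lt_countP hβs (by omega)).2 le_rfl
    have hB : ¬ (c < β.countP (fun x => x ≤ β.getD (c - 1) 0)) := fun h => by
      have := (sorted_lt_countP hβs (by omega : c < β.length)).1 h
      omega
    omega
  · have hcl : c ≤ γ.length := List.countP_le_length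
    refine ⟨β.foldr max 0, ?_⟩
    rw [cp_le_length (fun x hx => le_foldr_max hx), hlen]
    omega

lemma mem_T_of_compat {γ β : List ℕ} (hγs : γ.Pairwise (· ≤ ·)) (hγp : ∀ x ∈ γ, 0 < x)
    (h : CompatM β γ) :
    NTZ (multComp β) ∧ DomL (multComp β) (multComp γ) ∧
      Refines (posL (multComp β)) (posL (multComp γ)) := by
  obtain ⟨hlen, hpos, hsort, hpt, hbr⟩ := h
  refine ⟨NTZ_multComp hpos, ?_, ?_⟩
  · intro k
    rw [take_sum_multComp hγp, take_sum_multComp hpos]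
    exact cp_mono_pointwise γ β hlen hpt k
  · apply refines_of
    · exact fun v hv => posL_pos hv
    · exact fun v hv => posL_pos hv
    · rw [posL_sum, posL_sum, sum_multComp hpos, sum_multComp hγp, hlen]
    · intro k
      obtain ⟨k', hk'⟩ := posL_take_sum (multComp γ) k
      obtain ⟨m, hm⟩ := exists_countP_eq hγs hsort hpos hlen hbr k'
      obtain ⟨k'', hk''⟩ := take_sum_posL (multComp β) m
      refine ⟨k'', ?_⟩
      rw [hk', take_sum_multComp hγp, hm, ← take_sum_multComp hpos, hk'']

lemma compat_of_mem_T {γ b : List ℕ} (hγs : γ.Pairwise (· ≤ ·)) (hγp : ∀ x ∈ γ, 0 < x)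
    (h1 : NTZ b) (h2 : DomL b (multComp γ))
    (h3 : Refines (posL b) (posL (multComp γ))) :
    CompatM (toSeq b) γ ∧ multComp (toSeq b) = b := by
  have hmc := multComp_toSeq h1
  have hβs := toSeq_sorted b
  have hβp : ∀ x ∈ toSeq b, 0 < x := fun x hx => toSeq_pos hx
  have hsumb : b.sum = (multComp γ).sum := by
    have := refines_sum h3
    rwa [posL_sum, posL_sum] at this
  have hlen : (toSeq b).length = γ.length := by
    have h5 : (multComp (toSeq b)).sum = (toSeq b).length := sum_multComp hβp
    rw [hmc] at h5
    rw [sum_multComp hγp] at hsumb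
    omega
  have hcp : ∀ k, γ.countP (fun x => x ≤ k) ≤ (toSeq b).countP (fun x => x ≤ k) := by
    intro k
    have h6 := h2 k
    rw [take_sum_multComp hγp, ← hmc, take_sum_multComp hβp] at h6
    exact h6
  have hpt : ∀ i < γ.length, (toSeq b).getD i 0 ≤ γ.getD i 0 := by
    intro i hi
    have h4 : i < γ.countP (fun x => x ≤ γ.getD i 0) := (sorted_lt_countP hγs hi).2 le_rfl
    exact (sorted_lt_countP hβs (by omega)).1 (lt_of_lt_of_le h4 (hcp _))
  have hex : ∀ k, ∃ m, γ.countP (fun x => x ≤ k) = (toSeq b).countP (fun x => x ≤ m) := by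
    intro k
    obtain ⟨k', hk'⟩ := take_sum_posL (multComp γ) k
    obtain ⟨m, hm⟩ := refines_take h3 k'
    obtain ⟨m', hm'⟩ := posL_take_sum b m
    refine ⟨m', ?_⟩
    have hts : ((multComp (toSeq b)).take m').sum
        = (toSeq b).countP (fun x => x ≤ m') := take_sum_multComp hβp m'
    rw [hmc] at hts
    rw [← take_sum_multComp hγp, hk', hm, hm', ← hts]
  have hbr : ∀ i, i + 1 < γ.length → γ.getD i 0 < γ.getD (i + 1) 0 →
      (toSeq b).getD i 0 < (toSeq b).getD (i + 1) 0 := by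
    intro i hi hlt
    have hA : i < γ.countP (fun x => x ≤ γ.getD i 0) :=
      (sorted_lt_countP hγs (by omega)).2 le_rfl
    have hB : ¬ (i + 1 < γ.countP (fun x => x ≤ γ.getD i 0)) := fun h => by
      have := (sorted_lt_countP hγs hi).1 h
      omega
    obtain ⟨m, hm⟩ := hex (γ.getD i 0)
    have hA' : (toSeq b).getD i 0 ≤ m := (sorted_lt_countP hβs (by omega)).1 (by omega)
    have hB' : ¬ ((toSeq b).getD (i + 1) 0 ≤ m) := fun h => by
      have := (sorted_lt_countP hβs (by rw [hlen]; omega)).2 h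
      omega
    omega
  exact ⟨⟨hlen, hβp, hβs, hpt, hbr⟩, hmc⟩

lemma getD_set_self {l : List ℕ} {i : ℕ} (a : ℕ) (h : i < l.length) :
    (l.set i a).getD i 0 = a := by
  rw [List.getD_eq_getElem _ _ (by simpa using h), List.getElem_set, if_pos rfl]

lemma getD_set_ne {l : List ℕ} {i j : ℕ} (a : ℕ) (h : i ≠ j) :
    (l.set i a).getD j 0 = l.getD j 0 := by
  by_cases hj : j < l.length
  · rw [List.getD_eq_getElem _ _ (by simpa using hj), List.getElem_set_ne h,
      List.getD_eq_getElem _ _ hj]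
  · rw [List.getD_eq_default _ _ (by simpa using hj), List.getD_eq_default _ _ (by omega)]

lemma chain'_le_iff_getD {l : List ℕ} :
    l.Chain' (· ≤ ·) ↔ ∀ i, i + 1 < l.length → l.getD i 0 ≤ l.getD (i + 1) 0 := by
  unfold List.Chain'
  rw [List.isChain_iff_getElem]
  constructor
  · intro h i hi
    rw [List.getD_eq_getElem _ _ (by omega), List.getD_eq_getElem _ _ hi]
    simpa [List.get_eq_getElem] using h i (by omega)
  · intro h i hi
    have := h i (by omega)
    rwa [List.getD_eq_getElem _ _ (by omega), List.getD_eq_getElem _ _ (by omega)] at this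

lemma alpha_break {α βm : List ℕ} (hβm : IsCompatible βm α)
    (hmax : ∀ β : List ℕ, IsCompatible β α → ∀ i, i < β.length →
      β.getD i 0 ≤ βm.getD i 0) :
    ∀ i, i + 1 < α.length → βm.getD i 0 < βm.getD (i + 1) 0 →
      α.getD i 0 < α.getD (i + 1) 0 := by
  obtain ⟨hlen, hpos, hchain, hbd, hstr⟩ := hβm
  intro i hi hb
  by_contra hcon
  push_neg at hcon
  have hb1 : βm.getD (i + 1) 0 ≤ α.getD (i + 1) 0 := hbd (i + 1) (by omega)
  -- modified sequence
  set β' := βm.set i (βm.getD i 0 + 1) with hβ'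
  have hlen' : β'.length = α.length := by rw [hβ', List.length_set]; exact hlen
  have hget : ∀ j, j ≠ i → β'.getD j 0 = βm.getD j 0 := fun j hj => getD_set_ne _ (fun h => hj h.symm)
  have hgeti : β'.getD i 0 = βm.getD i 0 + 1 := getD_set_self _ (by omega)
  have hcomp : IsCompatible β' α := by
    refine ⟨hlen', ?_, ?_, ?_, ?_⟩
    · intro x hx
      rcases List.mem_or_eq_of_mem_set hx with h | h
      · exact hpos x h
      · omega
    · rw [chain'_le_iff_getD]
      intro j hj
      rw [chain'_le_iff_getD] at hchain
      have hc := hchain j (by omega)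
      rcases eq_or_ne j i with rfl | hji
      · rw [hgeti, hget (j + 1) (by omega)]
        omega
      · rcases eq_or_ne (j + 1) i with he | hne
        · rw [hget j hji, he, hgeti, ← he]
          omega
        · rw [hget j hji, hget (j + 1) hne]
          exact hc
    · intro j hj
      rcases eq_or_ne j i with rfl | hji
      · rw [hgeti]
        omega
      · rw [hget j hji]
        exact hbd j hj
    · intro j hj hstrα
      rw [chain'_le_iff_getD] at hchain
      rcases eq_or_ne j i with rfl | hji
      · omega
      · rcases eq_or_ne (j + 1) i with he | hne
        · rw [hget j hji, he, hgeti, ← he]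
          have := hstr j hj hstrα
          omega
        · rw [hget j hji, hget (j + 1) hne]
          exact hstr j hj hstrα
  have := hmax β' hcomp i (by omega)
  omega

lemma compat_iff_compatM {α βm : List ℕ} (hβm : IsCompatible βm α)
    (hmax : ∀ β : List ℕ, IsCompatible β α → ∀ i, i < β.length →
      β.getD i 0 ≤ βm.getD i 0) (β : List ℕ) :
    IsCompatible β α ↔ CompatM β βm := by
  obtain ⟨hlen, hpos, hchain, hbd, hstr⟩ := hβm
  constructor
  · rintro h
    obtain ⟨hlen', hpos', hchain', hbd', hstr'⟩ := h
    refine ⟨by omega, hpos', List.isChain_iff_pairwise.1 hchain', ?_, ?_⟩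
    · intro i hi
      exact hmax β ⟨hlen', hpos', hchain', hbd', hstr'⟩ i (by omega)
    · intro i hi hlt
      exact hstr' i (by omega) (alpha_break ⟨hlen, hpos, hchain, hbd, hstr⟩ hmax i (by omega) hlt)
  · rintro ⟨hlen', hpos', hsort', hbd', hstr'⟩
    refine ⟨by omega, hpos', List.isChain_iff_pairwise.2 hsort', ?_, ?_⟩
    · intro i hi
      exact le_trans (hbd' i (by omega)) (hbd i hi)
    · intro i hi hlt
      exact hstr' i (by omega) (hstr i hi hlt)

open MvPolynomial in
lemma prod_map_X_key : ∀ (l : List ℕ), (∀ x ∈ l, 0 < x) → ∀ (N : ℕ), (∀ x ∈ l, x ≤ N) →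
    (l.map (fun b => (X b : MvPolynomial ℕ ℤ))).prod
      = ∏ i ∈ Finset.range N, X (i + 1) ^ l.count (i + 1) := by
  intro l
  induction l with
  | nil => intro _ N _; simp
  | cons x t ih =>
    intro hp N hb
    simp only [List.map_cons, List.prod_cons]
    rw [ih (fun y hy => hp y (List.mem_cons_of_mem _ hy)) N
      (fun y hy => hb y (List.mem_cons_of_mem _ hy))]
    have hx1 : 0 < x := hp x (List.mem_cons_self)
    have hx2 : x ≤ N := hb x (List.mem_cons_self)
    have hcnt : ∀ i : ℕ, (x :: t).count (i + 1)
        = t.count (i + 1) + (if i = x - 1 then 1 else 0) := by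
      intro i
      rw [List.count_cons]
      congr 1
      by_cases h : i = x - 1
      · rw [if_pos h, if_pos (by simp; omega)]
      · rw [if_neg h, if_neg (by simp; omega)]
    simp only [hcnt, pow_add]
    rw [Finset.prod_mul_distrib]
    have h2 : (∏ i ∈ Finset.range N, (X (i + 1) : MvPolynomial ℕ ℤ) ^ (if i = x - 1 then 1 else 0))
        = X x := by
      rw [Finset.prod_congr rfl (fun i _ => pow_ite _ _ _ _)]
      simp only [pow_one, pow_zero]
      rw [Finset.prod_ite_eq' (Finset.range N) (x - 1) (fun i => (X (i + 1) : MvPolynomial ℕ ℤ))]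
      rw [if_pos (Finset.mem_range.2 (by omega)), show x - 1 + 1 = x by omega]
    rw [h2]
    ring

open MvPolynomial in
lemma prod_map_X {β : List ℕ} (hpos : ∀ x ∈ β, 0 < x) :
    (β.map (fun b => (X b : MvPolynomial ℕ ℤ))).prod = xlistN (multComp β) := by
  rw [prod_map_X_key β hpos (β.foldr max 0) (fun x hx => le_foldr_max hx)]
  unfold xlistN
  rw [length_multComp]
  apply Finset.prod_congr rfl
  intro i hi
  rw [getD_multComp, if_pos (Finset.mem_range.1 hi)]

/-- For a strong composition `α` admitting a compatible sequence, with termwise-maximal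
compatible sequence `β(α)` and `a(α)` the weak composition of multiplicities of `β(α)`:
`∑_{β ⟲ α} ∏_i x_{β_i} = ∑_b x^b`, summed over weak compositions `b` with `b ≥ a(α)` in
dominance order and `b⁺ ⊨ a(α)⁺`.  In particular the fundamental slide polynomial
`𝔉_{a(α)} = ∑_{β ⟲ α} ∏_i x_{β_i}` depends only on `a(α)`. -/
theorem fundamental_slide_monomial_expansion (α βm : List ℕ)
    (hα : ∀ x ∈ α, 0 < x)
    (hβm : IsCompatible βm α)
    (hmax : ∀ β : List ℕ, IsCompatible β α → ∀ i, i < β.length →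
      β.getD i 0 ≤ βm.getD i 0) :
    (∑ᶠ (β : List ℕ) (_ : IsCompatible β α),
        (β.map (fun b => (X b : MvPolynomial ℕ ℤ))).prod) =
      ∑ᶠ (b : List ℕ)
        (_ : NTZ b ∧ DomL b (multComp βm) ∧ Refines (posL b) (posL (multComp βm))),
        xlistN b := by
  obtain ⟨hlen, hpos, hchain, hbd, hstr⟩ := hβm
  have hβm' : IsCompatible βm α := ⟨hlen, hpos, hchain, hbd, hstr⟩
  have hγs : βm.Pairwise (· ≤ ·) := List.isChain_iff_pairwise.1 hchain
  have hS : {β : List ℕ | IsCompatible β α} = {β : List ℕ | CompatM β βm} :=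
    Set.ext fun β => compat_iff_compatM hβm' hmax β
  have hinj : Set.InjOn multComp {β : List ℕ | CompatM β βm} := by
    intro b1 h1 b2 h2 he
    have e1 : toSeq (multComp b1) = b1 := toSeq_multComp h1.2.1 h1.2.2.1
    have e2 : toSeq (multComp b2) = b2 := toSeq_multComp h2.2.1 h2.2.2.1
    rw [← e1, he, e2]
  have hT : {b : List ℕ | NTZ b ∧ DomL b (multComp βm) ∧
        Refines (posL b) (posL (multComp βm))}
      = multComp '' {β : List ℕ | CompatM β βm} := by
    ext b
    constructor
    · rintro ⟨h1, h2, h3⟩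
      obtain ⟨hcm, hmc⟩ := compat_of_mem_T hγs hpos h1 h2 h3
      exact ⟨toSeq b, hcm, hmc⟩
    · rintro ⟨β, hβ, rfl⟩
      exact mem_T_of_compat hγs hpos hβ
  calc (∑ᶠ (β : List ℕ) (_ : IsCompatible β α),
        (β.map (fun b => (X b : MvPolynomial ℕ ℤ))).prod)
      = ∑ᶠ β ∈ {β : List ℕ | CompatM β βm}, xlistN (multComp β) := by
        apply finsum_mem_congr hS
        intro β hβ
        exact prod_map_X hβ.2.1
    _ = ∑ᶠ b ∈ multComp '' {β : List ℕ | CompatM β βm}, xlistN b :=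
        (finsum_mem_image hinj).symm
    _ = ∑ᶠ (b : List ℕ)
        (_ : NTZ b ∧ DomL b (multComp βm) ∧ Refines (posL b) (posL (multComp βm))),
        xlistN b := by
          rw [← hT]
          rfl
end
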